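/- arXiv:2311.08325 — 2 statements merged into one kernel-verified Lean document; each statement's English description precedes it below -/
import Mathlib

section
/- Fix ℓ ≥ 1, m ≥ 1, a symbol Λ₁, and 1 ≤ k ≤ min(ℓ, m). The number of length-m run-length-ℓ-limited sequences over Fin 4 whose first k symbols all equal Λ₁ and (if k < m) whose (k+1)-th symbol differs from Λ₁ satisfies N_{Λ₁,k}(m) = 3·N(m−k)/4 whenever m − k ≥ 1, where N denotes the total count of run-length-ℓ-limited sequences (using N(m') = total count for m' ≥ 1). -/
open Mathlib

/-- A sequence (as a list) contains a run of `L` identical consecutive symbols. -/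
def hasRun (L : ℕ) (l : List (Fin 4)) : Prop := ∃ x : Fin 4, List.replicate L x <:+: l

instance (L : ℕ) (l : List (Fin 4)) : Decidable (hasRun L l) := by
  unfold hasRun; infer_instance

/-- Total count of run-length-`ℓ`-limited length-`m` sequences over `Fin 4`. -/
noncomputable def N (ℓ m : ℕ) : ℕ :=
  Fintype.card {v : List.Vector (Fin 4) m // ¬ hasRun (ℓ + 1) v.toList}

/-- Count of run-length-`ℓ`-limited length-`m` sequences over `Fin 4` whose maximal
initial run of `Λ₁` has length exactly `k`: the first `k` symbols equal `Λ₁`, and if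
`k < m` the `(k+1)`-th symbol differs from `Λ₁`. -/
noncomputable def NΛk (ℓ m : ℕ) (Λ₁ : Fin 4) (k : ℕ) : ℕ :=
  Fintype.card {v : List.Vector (Fin 4) m //
    ¬ hasRun (ℓ + 1) v.toList ∧ (∀ i < k, v.toList.getD i 0 = Λ₁) ∧
      (k < m → v.toList.getD k 0 ≠ Λ₁)}

lemma run_append {ℓ k : ℕ} (hk1 : 1 ≤ k) (hk : k ≤ ℓ) (Λ₁ : Fin 4) (t : List (Fin 4))
    (htne : t ≠ []) (ht : t.getD 0 0 ≠ Λ₁) :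
    hasRun (ℓ+1) (List.replicate k Λ₁ ++ t) ↔ hasRun (ℓ+1) t := by
  constructor
  · rintro ⟨x, s, t', h⟩
    rw [List.append_assoc] at h
    rcases le_or_gt k s.length with hs | hs
    · -- run lies in t
      refine ⟨x, s.drop k, t', ?_⟩
      rw [List.append_assoc]
      have key : List.replicate k Λ₁ ++ (s.drop k ++ (List.replicate (ℓ+1) x ++ t'))
          = List.replicate k Λ₁ ++ t := by
        rw [← h]
        have hs' : s.take k = List.replicate k Λ₁ := by
          apply List.ext_getElem
          · simp; omega
          · intro i h1 h2
            have hik : i < k := by simp at h1; omega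
            have e : s[i]'(by omega) = (s ++ (List.replicate (ℓ+1) x ++ t'))[i]'(by
                simp; omega) := (List.getElem_append_left (by omega)).symm
            rw [List.getElem_take, e, List.getElem_of_eq h, List.getElem_append_left (by simpa using hik),
              List.getElem_replicate]
        calc List.replicate k Λ₁ ++ (s.drop k ++ (List.replicate (ℓ+1) x ++ t'))
            = (s.take k ++ s.drop k) ++ (List.replicate (ℓ+1) x ++ t') := by
              rw [hs']; simp
          _ = s ++ (List.replicate (ℓ+1) x ++ t') := by rw [List.take_append_drop]
      exact List.append_cancel_left key
    · -- run crosses the boundary: contradiction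
      exfalso
      have hlen : (s ++ (List.replicate (ℓ+1) x ++ t')).length = k + t.length := by
        rw [h]; simp
      have htl : 1 ≤ t.length := List.length_pos_iff.mpr htne
      have e1 : (s ++ (List.replicate (ℓ+1) x ++ t'))[k-1]'(by omega) = Λ₁ := by
        rw [List.getElem_of_eq h, List.getElem_append_left (by simp; omega), List.getElem_replicate]
      have e2 : (s ++ (List.replicate (ℓ+1) x ++ t'))[k]'(by omega) = t.getD 0 0 := by
        rw [List.getElem_of_eq h, List.getElem_append_right (by simp), List.getD_eq_getElem t 0 (by omega)]
        simp
      have f1 : (s ++ (List.replicate (ℓ+1) x ++ t'))[k-1]'(by omega) = x := by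
        rw [List.getElem_append_right (by omega), List.getElem_append_left
          (by simp; omega), List.getElem_replicate]
      have f2 : (s ++ (List.replicate (ℓ+1) x ++ t'))[k]'(by omega) = x := by
        rw [List.getElem_append_right (by omega), List.getElem_append_left
          (by simp; omega), List.getElem_replicate]
      rw [e1] at f1
      rw [e2] at f2
      exact ht (f2.trans f1.symm)
  · rintro ⟨x, hx⟩
    exact ⟨x, hx.trans (List.suffix_append _ _).isInfix⟩

lemma hasRun_map (L : ℕ) (σ : Equiv.Perm (Fin 4)) (l : List (Fin 4)) :
    hasRun L (l.map σ) ↔ hasRun L l := by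
  constructor
  · rintro ⟨x, hx⟩
    refine ⟨σ.symm x, ?_⟩
    have := hx.map σ.symm
    simpa [List.map_map, List.map_replicate] using this
  · rintro ⟨x, hx⟩
    exact ⟨σ x, by simpa [List.map_replicate] using hx.map σ⟩

lemma count_head (ℓ n : ℕ) (hn : 1 ≤ n) (Λ₁ : Fin 4) :
    4 * Fintype.card {w : List.Vector (Fin 4) n //
      ¬ hasRun (ℓ+1) w.toList ∧ w.toList.getD 0 0 ≠ Λ₁} = 3 * N ℓ n := by
  classical
  set c : Fin 4 → ℕ := fun a => Fintype.card {w : List.Vector (Fin 4) n //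
      ¬ hasRun (ℓ+1) w.toList ∧ w.toList.getD 0 0 = a} with hc
  have hlen : ∀ w : List.Vector (Fin 4) n, w.toList.length = n := fun w => w.toList_length
  have hcongr : ∀ a b : Fin 4, c a = c b := by
    intro a b
    apply Fintype.card_congr
    refine ⟨fun w => ⟨w.1.map (Equiv.swap a b), ?_, ?_⟩,
           fun w => ⟨w.1.map (Equiv.swap a b), ?_, ?_⟩, ?_, ?_⟩
    · rw [List.Vector.toList_map, hasRun_map]; exact w.2.1
    · have h0 : 0 < w.1.toList.length := by rw [hlen]; omega
      rw [List.Vector.toList_map, List.getD_eq_getElem _ _ (by simpa using h0),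
        List.getElem_map]
      have h2 := w.2.2
      rw [List.getD_eq_getElem _ _ h0] at h2
      rw [h2, Equiv.swap_apply_left]
    · rw [List.Vector.toList_map, hasRun_map]; exact w.2.1
    · have h0 : 0 < w.1.toList.length := by rw [hlen]; omega
      rw [List.Vector.toList_map, List.getD_eq_getElem _ _ (by simpa using h0),
        List.getElem_map]
      have h2 := w.2.2
      rw [List.getD_eq_getElem _ _ h0] at h2
      rw [h2, Equiv.swap_apply_right]
    · intro w
      apply Subtype.ext; apply List.Vector.eq; simp [List.Vector.toList_map, List.map_map,
        Function.comp, Equiv.swap_apply_self]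
    · intro w
      apply Subtype.ext; apply List.Vector.eq; simp [List.Vector.toList_map, List.map_map,
        Function.comp, Equiv.swap_apply_self]
  have hsum : N ℓ n = ∑ a : Fin 4, c a := by
    rw [N, Fintype.card_subtype]
    rw [Finset.card_eq_sum_card_fiberwise
      (f := fun w : List.Vector (Fin 4) n => w.toList.getD 0 0) (t := Finset.univ)
      (fun x _ => Finset.mem_univ _)]
    refine Finset.sum_congr rfl fun a _ => ?_
    show _ = Fintype.card {w : List.Vector (Fin 4) n //
      ¬ hasRun (ℓ+1) w.toList ∧ w.toList.getD 0 0 = a}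
    rw [Fintype.card_subtype, Finset.filter_filter]
  have hsplit : c Λ₁ + Fintype.card {w : List.Vector (Fin 4) n //
      ¬ hasRun (ℓ+1) w.toList ∧ w.toList.getD 0 0 ≠ Λ₁} = N ℓ n := by
    show Fintype.card {w : List.Vector (Fin 4) n //
      ¬ hasRun (ℓ+1) w.toList ∧ w.toList.getD 0 0 = Λ₁} + _ = _
    rw [N, Fintype.card_subtype, Fintype.card_subtype, Fintype.card_subtype,
      ← Finset.filter_filter, ← Finset.filter_filter]
    exact Finset.card_filter_add_card_filter_not
      (fun w : List.Vector (Fin 4) n => w.toList.getD 0 0 = Λ₁)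
  have h4 : N ℓ n = 4 * c Λ₁ := by
    rw [hsum]
    rw [Finset.sum_congr rfl (fun a _ => hcongr a Λ₁)]
    simp [Finset.sum_const, mul_comm]
  omega

lemma split_iff (ℓ k n : ℕ) (hk1 : 1 ≤ k) (hkℓ : k ≤ ℓ) (hn : 1 ≤ n) (Λ₁ : Fin 4)
    (v : List.Vector (Fin 4) (k + n)) :
    (¬ hasRun (ℓ+1) v.toList ∧ (∀ i < k, v.toList.getD i 0 = Λ₁) ∧
      (k < k + n → v.toList.getD k 0 ≠ Λ₁))
    ↔ (v.toList = List.replicate k Λ₁ ++ v.toList.drop k ∧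
        ¬ hasRun (ℓ+1) (v.toList.drop k) ∧ (v.toList.drop k).getD 0 0 ≠ Λ₁) := by
  have hlen : v.toList.length = k + n := v.toList_length
  have hdl : (v.toList.drop k).length = n := by rw [List.length_drop, hlen]; omega
  have tne : v.toList.drop k ≠ [] := by
    intro h; rw [h] at hdl; simp at hdl; omega
  have hgd : (v.toList.drop k).getD 0 0 = v.toList.getD k 0 := by
    rw [List.getD_eq_getElem _ _ (by omega), List.getD_eq_getElem _ _ (by omega),
      List.getElem_drop]
    simp
  constructor
  · rintro ⟨h1, h2, h3⟩
    have hdec : v.toList = List.replicate k Λ₁ ++ v.toList.drop k := by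
      conv_lhs => rw [← List.take_append_drop k v.toList]
      congr 1
      apply List.ext_getElem
      · simp [hlen]
      · intro i hi1 hi2
        have hik : i < k := by simp [hlen] at hi1; omega
        rw [List.getElem_take, List.getElem_replicate,
          ← List.getD_eq_getElem v.toList 0 (by omega)]
        exact h2 i hik
    have hne : (v.toList.drop k).getD 0 0 ≠ Λ₁ := by rw [hgd]; exact h3 (by omega)
    refine ⟨hdec, ?_, hne⟩
    intro hr
    exact h1 (by rw [hdec]; exact (run_append hk1 hkℓ Λ₁ _ tne hne).mpr hr)
  · rintro ⟨hdec, h1, h2⟩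
    refine ⟨?_, ?_, fun _ => by rw [← hgd]; exact h2⟩
    · intro hr
      rw [hdec] at hr
      exact h1 ((run_append hk1 hkℓ Λ₁ _ tne h2).mp hr)
    · intro i hik
      rw [List.getD_eq_getElem _ _ (by omega), List.getElem_of_eq hdec,
        List.getElem_append_left (by simpa using hik), List.getElem_replicate]

lemma card_eq (ℓ k n : ℕ) (hk1 : 1 ≤ k) (hkℓ : k ≤ ℓ) (hn : 1 ≤ n) (Λ₁ : Fin 4) :
    Fintype.card {v : List.Vector (Fin 4) (k + n) //
      ¬ hasRun (ℓ+1) v.toList ∧ (∀ i < k, v.toList.getD i 0 = Λ₁) ∧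
        (k < k + n → v.toList.getD k 0 ≠ Λ₁)}
    = Fintype.card {w : List.Vector (Fin 4) n //
        ¬ hasRun (ℓ+1) w.toList ∧ w.toList.getD 0 0 ≠ Λ₁} := by
  classical
  rw [Fintype.card_congr (Equiv.subtypeEquivRight (split_iff ℓ k n hk1 hkℓ hn Λ₁))]
  apply Fintype.card_congr
  refine ⟨fun v => ⟨⟨v.1.1.drop k, by rw [List.length_drop, v.1.2]; omega⟩,
      v.2.2.1, v.2.2.2⟩,
    fun w => ⟨⟨List.replicate k Λ₁ ++ w.1.1, by simp [w.1.2]⟩, ?_⟩, ?_, ?_⟩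
  · have hdr : (List.replicate k Λ₁ ++ w.1.1).drop k = w.1.1 := by
      simpa using List.drop_left (List.replicate k Λ₁) w.1.1
    refine ⟨?_, ?_, ?_⟩
    · show List.replicate k Λ₁ ++ w.1.1
        = List.replicate k Λ₁ ++ (List.replicate k Λ₁ ++ w.1.1).drop k
      rw [hdr]
    · show ¬ hasRun (ℓ+1) ((List.replicate k Λ₁ ++ w.1.1).drop k)
      rw [hdr]; exact w.2.1
    · show ((List.replicate k Λ₁ ++ w.1.1).drop k).getD 0 0 ≠ Λ₁
      rw [hdr]; exact w.2.2
  · intro v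
    apply Subtype.ext; apply List.Vector.eq
    show List.replicate k Λ₁ ++ v.1.1.drop k = v.1.1
    exact v.2.1.symm
  · intro w
    apply Subtype.ext; apply List.Vector.eq
    show (List.replicate k Λ₁ ++ w.1.1).drop k = w.1.1
    simpa using List.drop_left (List.replicate k Λ₁) w.1.1

/-- For `ℓ ≥ 1`, `m ≥ 1`, `1 ≤ k ≤ min ℓ m`, and `m − k ≥ 1`:
`4 · N_{Λ₁,k}(m) = 3 · N(m−k)`. -/
theorem stmt6 (ℓ m : ℕ) (hℓ : 1 ≤ ℓ) (hm : 1 ≤ m) (Λ₁ : Fin 4) (k : ℕ)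
    (hk1 : 1 ≤ k) (hk2 : k ≤ min ℓ m) (hmk : 1 ≤ m - k) :
    4 * NΛk ℓ m Λ₁ k = 3 * N ℓ (m - k) := by
  obtain ⟨n, rfl⟩ : ∃ n, m = k + n := ⟨m - k, by omega⟩
  have hn : 1 ≤ n := by omega
  have hkℓ : k ≤ ℓ := le_trans hk2 (min_le_left _ _)
  rw [show k + n - k = n from by omega]
  rw [NΛk, card_eq ℓ k n hk1 hkℓ hn Λ₁]
  exact count_head ℓ n hn Λ₁
end

section
/- For ℓ ≥ 1 and q ≥ 2, the polynomial x^ℓ − (q−1)·(x^(ℓ−1) + x^(ℓ−2) + ... + x + 1) has exactly one real root in the interval (q−1, q). -/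
open Finset

/-- For `ℓ ≥ 2` and `q ≥ 2`, the polynomial
`x^ℓ − (q−1)·(x^(ℓ−1) + ⋯ + x + 1)` has exactly one real root in the open interval
`(q−1, q)`. (For `ℓ = 1` the root is exactly `q−1`, so `ℓ ≥ 2` is assumed for the
strict lower bound.) -/
theorem stmt14 (ℓ q : ℕ) (hℓ : 2 ≤ ℓ) (hq : 2 ≤ q) :
    ∃! x : ℝ, x ∈ Set.Ioo ((q : ℝ) - 1) (q : ℝ) ∧
      x ^ ℓ - ((q : ℝ) - 1) * ∑ i ∈ Finset.range ℓ, x ^ i = 0 := by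
  set s : ℝ := (q : ℝ) - 1 with hs
  have hq2 : (2 : ℝ) ≤ (q : ℝ) := by exact_mod_cast hq
  have hs1 : (1 : ℝ) ≤ s := by simp [hs]; linarith
  have hs0 : (0 : ℝ) < s := lt_of_lt_of_le one_pos hs1
  set f : ℝ → ℝ := fun x => x ^ ℓ - s * ∑ i ∈ Finset.range ℓ, x ^ i with hf
  -- f continuous
  have hcont : Continuous f := by
    apply (continuous_pow ℓ).sub
    exact continuous_const.mul (continuous_finset_sum _ fun i _ => continuous_pow i)
  -- f q = 1
  have hfq : f (q : ℝ) = 1 := by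
    have := geom_sum_mul (q : ℝ) ℓ
    simp only [hf]
    have : s * ∑ i ∈ Finset.range ℓ, (q : ℝ) ^ i = (q : ℝ) ^ ℓ - 1 := by
      rw [hs, mul_comm]; exact geom_sum_mul (q : ℝ) ℓ
    rw [this]; ring
  -- f s < 0
  have hfs : f s < 0 := by
    simp only [hf]
    have hrw : s * ∑ i ∈ Finset.range ℓ, s ^ i = ∑ i ∈ Finset.range ℓ, s ^ (i + 1) := by
      rw [Finset.mul_sum]
      exact Finset.sum_congr rfl fun i _ => by ring
    rw [hrw]
    have hm : ℓ = (ℓ - 1) + 1 := by omega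
    rw [hm, Finset.sum_range_succ]
    have hsum : 0 < ∑ i ∈ Finset.range (ℓ - 1), s ^ (i + 1) := by
      apply Finset.sum_pos (fun i _ => pow_pos hs0 _)
      exact Finset.nonempty_range_iff.mpr (by omega)
    have : s ^ ((ℓ - 1) + 1) = s ^ ℓ := by rw [← hm]
    rw [this]
    linarith
  -- existence via IVT
  have hivt := intermediate_value_Ioo (le_of_lt (by linarith : s < (q : ℝ)))
    hcont.continuousOn (a := s) (b := (q : ℝ))
  have h0mem : (0 : ℝ) ∈ Set.Ioo (f s) (f (q : ℝ)) := by
    rw [hfq]; exact ⟨hfs, one_pos⟩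
  obtain ⟨x, hxmem, hxf⟩ := hivt h0mem
  -- auxiliary function g
  set g : ℝ → ℝ := fun z => s * ∑ i ∈ Finset.range ℓ, (z⁻¹) ^ (ℓ - i) with hg
  have key : ∀ z : ℝ, 0 < z → (f z = 0 ↔ g z = 1) := by
    intro z hz
    have hzne : z ≠ 0 := ne_of_gt hz
    have hzpow : z ^ ℓ ≠ 0 := pow_ne_zero _ hzne
    have hgz : z ^ ℓ * g z = s * ∑ i ∈ Finset.range ℓ, z ^ i := by
      rw [hg]
      rw [mul_comm (z ^ ℓ), mul_assoc, Finset.sum_mul]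
      congr 1
      apply Finset.sum_congr rfl
      intro i hi
      have hil : i ≤ ℓ := le_of_lt (Finset.mem_range.mp hi)
      have : z ^ ℓ = z ^ i * z ^ (ℓ - i) := by
        rw [← pow_add]; congr 1; omega
      rw [this, inv_pow]
      field_simp
    have hfz : f z = z ^ ℓ * (1 - g z) := by
      simp only [hf]; rw [mul_sub, mul_one, hgz]
    rw [hfz]
    constructor
    · intro h
      rcases mul_eq_zero.mp h with h' | h'
      · exact absurd h' hzpow
      · linarith
    · intro h; rw [h]; ring
  -- g strictly anti on Ioi 0
  have hanti : StrictAntiOn g (Set.Ioi 0) := by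
    intro a ha b hb hab
    simp only [Set.mem_Ioi] at ha hb
    apply mul_lt_mul_of_pos_left _ hs0
    apply Finset.sum_lt_sum_of_nonempty (Finset.nonempty_range_iff.mpr (by omega))
    intro i hi
    have hinv : b⁻¹ < a⁻¹ := by
      rw [inv_lt_inv₀ hb ha]; exact hab
    have hbinv : (0 : ℝ) ≤ b⁻¹ := le_of_lt (inv_pos.mpr hb)
    exact pow_lt_pow_left₀ hinv hbinv (by have := Finset.mem_range.mp hi; omega)
  refine ⟨x, ⟨hxmem, hxf⟩, ?_⟩
  rintro y ⟨hymem, hyf⟩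
  have hxpos : 0 < x := lt_trans hs0 hxmem.1
  have hypos : 0 < y := lt_trans hs0 hymem.1
  have hgx : g x = 1 := (key x hxpos).mp hxf
  have hgy : g y = 1 := (key y hypos).mp hyf
  exact hanti.injOn (Set.mem_Ioi.mpr hypos) (Set.mem_Ioi.mpr hxpos) (hgy.trans hgx.symm)
end
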